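/- Let Γ be a linearly ordered abelian group and let p be a prime number. Then the set S = {x ∈ Γ : for all y ∈ Γ, if 0 ≤ y ≤ |x| then there exists z ∈ Γ with p·z = y} is a convex subgroup of Γ, S is p-divisible (for every s ∈ S there exists t ∈ S with p·t = s), and every p-divisible convex subgroup of Γ is contained in S; that is, S is the maximal p-divisible convex subgroup of Γ. -/

import Mathlib

/-- A convex subgroup of a linearly ordered abelian group: a subgroup `H` such that
whenever `h ∈ H` and `0 ≤ x ≤ h`, then `x ∈ H`. -/
def IsConvexSubgroup {Γ : Type*} [AddCommGroup Γ] [LinearOrder Γ] [IsOrderedAddMonoid Γ] (H : AddSubgroup Γ) : Prop :=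
  ∀ h ∈ H, ∀ x : Γ, 0 ≤ x → x ≤ h → x ∈ H

/-- For a linearly ordered abelian group `Γ` and a prime `p`, the set
`S = {x ∈ Γ : ∀ y, 0 ≤ y ≤ |x| → ∃ z, p·z = y}` is a convex subgroup of `Γ`, it is
`p`-divisible, and it contains every `p`-divisible convex subgroup of `Γ`; i.e. `S` is
the maximal `p`-divisible convex subgroup of `Γ`. -/
theorem maximal_pDivisible_convex_subgroup
    {Γ : Type*} [AddCommGroup Γ] [LinearOrder Γ] [IsOrderedAddMonoid Γ] (p : ℕ) (hp : p.Prime) :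
    ∃ S : AddSubgroup Γ,
      (S : Set Γ) = {x : Γ | ∀ y : Γ, 0 ≤ y → y ≤ |x| → ∃ z : Γ, p • z = y} ∧
      IsConvexSubgroup S ∧
      (∀ s ∈ S, ∃ t ∈ S, p • t = s) ∧
      ∀ H : AddSubgroup Γ, IsConvexSubgroup H → (∀ h ∈ H, ∃ h' ∈ H, p • h' = h) →
        H ≤ S := by
  have hp0 : p ≠ 0 := hp.ne_zero
  set A : Set Γ := {x : Γ | ∀ y : Γ, 0 ≤ y → y ≤ |x| → ∃ z : Γ, p • z = y} with hA
  have hzero : (0 : Γ) ∈ A := by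
    intro y hy hy'
    simp only [abs_zero] at hy'
    exact ⟨0, by simp [le_antisymm hy' hy]⟩
  have hadd : ∀ a b : Γ, a ∈ A → b ∈ A → a + b ∈ A := by
    rintro a b ha hb y hy hyle
    rcases le_total y |a| with h | h
    · exact ha y hy h
    · obtain ⟨z1, hz1⟩ := ha |a| (abs_nonneg a) le_rfl
      obtain ⟨z2, hz2⟩ := hb (y - |a|) (sub_nonneg.2 h) (by
        have h2 : y ≤ |a| + |b| := le_trans hyle (abs_add_le a b)
        exact sub_le_iff_le_add'.2 h2)
      exact ⟨z1 + z2, by rw [smul_add, hz1, hz2]; abel⟩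
  have hneg : ∀ a : Γ, a ∈ A → -a ∈ A := by
    intro a ha y hy hyle
    exact ha y hy (by rwa [abs_neg] at hyle)
  refine ⟨{ carrier := A
            zero_mem' := hzero
            add_mem' := fun ha hb => hadd _ _ ha hb
            neg_mem' := fun ha => hneg _ ha }, rfl, ?_, ?_, ?_⟩
  · intro h hh x hx hxh
    intro y hy hyle
    have h1 : |x| ≤ |h| := (abs_of_nonneg hx).trans_le (hxh.trans (le_abs_self h))
    exact hh y hy (le_trans hyle h1)
  · intro s hs
    obtain ⟨z, hz⟩ := hs |s| (abs_nonneg s) le_rfl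
    have hz0 : 0 ≤ z := (nsmul_nonneg_iff hp0).1 (hz ▸ abs_nonneg s)
    have hzle : z ≤ |s| := by
      calc z = 1 • z := (one_nsmul z).symm
        _ ≤ p • z := nsmul_le_nsmul_left hz0 hp.one_lt.le
        _ = |s| := hz
    have hzA : z ∈ A := fun y hy hyle => by
      rw [abs_of_nonneg hz0] at hyle
      exact hs y hy (le_trans hyle hzle)
    rcases le_total 0 s with h | h
    · exact ⟨z, hzA, by rwa [abs_of_nonneg h] at hz⟩
    · refine ⟨-z, ?_, ?_⟩
      · intro y hy hyle
        exact hzA y hy (by rwa [abs_neg] at hyle)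
      · rw [smul_neg, hz, abs_of_nonpos h, neg_neg]
  · intro H hconv hdiv x hx y hy hyle
    have habs : |x| ∈ H := by
      rcases abs_choice x with h | h
      · rwa [h]
      · rw [h]; exact neg_mem hx
    have hyH : y ∈ H := hconv |x| habs y hy hyle
    obtain ⟨h', _, hh'⟩ := hdiv y hyH
    exact ⟨h', hh'⟩
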